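/- arXiv:1912.09899 — 2 statements merged into one kernel-verified Lean document; each statement's English description precedes it below -/
import Mathlib

section
/- Let X ~ N(x, σ²I) and Y ~ N(x+δ, σ²I) be Gaussian random vectors on ℝ^d, let M : ℝ^d → {0,1} be measurable, and let β ∈ ℝ. (1) If Z = {z ∈ ℝ^d : δᵀz ≤ β} and Pr(M(X) = 1) ≥ Pr(X ∈ Z), then Pr(M(Y) = 1) ≥ Pr(Y ∈ Z). (2) If Z = {z ∈ ℝ^d : δᵀz ≥ β} and Pr(M(X) = 1) ≤ Pr(X ∈ Z), then Pr(M(Y) = 1) ≤ Pr(Y ∈ Z). -/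
open MeasureTheory ProbabilityTheory Real Filter

/-- The standard normal cumulative distribution function Φ. -/
noncomputable def Phi (t : ℝ) : ℝ := (gaussianReal 0 1 (Set.Iic t)).toReal

/-- The inverse Φ⁻¹ of the standard normal CDF (meaningful on (0,1)). -/
noncomputable def PhiInv : ℝ → ℝ := Function.invFun Phi

/-- The Gaussian measure N(m, σ²I) on ℝ^d. -/
noncomputable def gaussianVec {d : ℕ} (m : Fin d → ℝ) (σ : ℝ) :
    Measure (Fin d → ℝ) :=
  Measure.pi fun i => gaussianReal (m i) (Real.toNNReal (σ ^ 2))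

/-- Dot product on ℝ^d. -/
def dotp {d : ℕ} (a b : Fin d → ℝ) : ℝ := ∑ i, a i * b i

/-- Euclidean (ℓ₂) norm on ℝ^d. -/
noncomputable def l2norm {d : ℕ} (a : Fin d → ℝ) : ℝ := Real.sqrt (∑ i, a i ^ 2)

open scoped ENNReal NNReal

section aux

variable {ι : Type*} [Fintype ι] [DecidableEq ι]

lemma lintegral_pi_prod (μ : ι → Measure ℝ) [∀ i, SigmaFinite (μ i)]
    (f : ι → ℝ → ℝ≥0∞) (hf : ∀ i, Measurable (f i)) :
    ∫⁻ z, ∏ i, f i (z i) ∂Measure.pi μ = ∏ i, ∫⁻ t, f i t ∂μ i := by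
  have hmeas : Measurable fun z : ι → ℝ => ∏ i, f i (z i) :=
    Finset.measurable_prod _ fun i _ => (hf i).comp (measurable_pi_apply i)
  have claim : ∀ s : Finset ι, ∀ x : ι → ℝ,
      (∫⋯∫⁻_s, (fun z => ∏ i, f i (z i)) ∂μ) x
        = (∏ i ∈ sᶜ, f i (x i)) * ∏ i ∈ s, ∫⁻ t, f i t ∂μ i := by
    intro s
    induction s using Finset.induction_on with
    | empty => intro x; simp
    | @insert a s' ha ih =>
      intro x
      rw [lmarginal_insert _ hmeas ha]
      have key : ∀ t : ℝ,
          (∫⋯∫⁻_s', (fun z => ∏ i, f i (z i)) ∂μ) (Function.update x a t)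
            = f a t * ((∏ i ∈ s'ᶜ.erase a, f i (x i)) * ∏ i ∈ s', ∫⁻ u, f i u ∂μ i) := by
        intro t
        rw [ih]
        have haC : a ∈ s'ᶜ := Finset.mem_compl.2 ha
        rw [← Finset.mul_prod_erase _ _ haC]
        have h1 : Function.update x a t a = t := Function.update_self a t x
        have h2 : ∀ i ∈ s'ᶜ.erase a, f i (Function.update x a t i) = f i (x i) := by
          intro i hi
          rw [Function.update_of_ne (Finset.ne_of_mem_erase hi)]
        rw [Finset.prod_congr rfl h2, h1, mul_assoc]
      simp_rw [key]
      rw [lintegral_mul_const _ (hf a)]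
      rw [Finset.compl_insert, Finset.prod_insert ha]
      ring
  cases isEmpty_or_nonempty ι with
  | inl h => simp
  | inr h =>
    rw [lintegral_eq_lmarginal_univ (fun _ => 0), claim]
    simp

end aux


lemma gaussian_shift_density {σ : ℝ} (hσ : 0 < σ) (m a : ℝ) :
    gaussianReal (m + a) (Real.toNNReal (σ ^ 2))
      = (gaussianReal m (Real.toNNReal (σ ^ 2))).withDensity
          (fun t => ENNReal.ofReal (rexp ((a * t - (a * m + a ^ 2 / 2)) / σ ^ 2))) := by
  set v : ℝ≥0 := Real.toNNReal (σ ^ 2) with hv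
  have hσ2 : (0:ℝ) < σ ^ 2 := by positivity
  have hvv : (v : ℝ) = σ ^ 2 := Real.coe_toNNReal _ hσ2.le
  have hv0 : v ≠ 0 := by
    simp only [hv, ne_eq, Real.toNNReal_eq_zero, not_le]
    exact hσ2
  have hg : Measurable fun t : ℝ =>
      ENNReal.ofReal (rexp ((a * t - (a * m + a ^ 2 / 2)) / σ ^ 2)) := by
    fun_prop
  rw [gaussianReal_of_var_ne_zero _ hv0, gaussianReal_of_var_ne_zero _ hv0,
    ← withDensity_mul _ (measurable_gaussianPDF _ _) hg]
  congr 1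
  funext t
  unfold gaussianPDF
  rw [Pi.mul_apply, ← ENNReal.ofReal_mul (gaussianPDFReal_nonneg _ _ _)]
  congr 1
  unfold gaussianPDFReal
  rw [hvv]
  have heq : -(t - (m + a)) ^ 2 / (2 * σ ^ 2)
      = -(t - m) ^ 2 / (2 * σ ^ 2) + (a * t - (a * m + a ^ 2 / 2)) / σ ^ 2 := by
    field_simp
    ring
  rw [heq, Real.exp_add, ← mul_assoc]


section pidensity

lemma gaussianVec_shift_density {d : ℕ} {σ : ℝ} (hσ : 0 < σ) (x δ : Fin d → ℝ) :
    gaussianVec (x + δ) σ = (gaussianVec x σ).withDensity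
      (fun z => ENNReal.ofReal
        (rexp ((dotp δ z - (dotp δ x + (∑ i, δ i ^ 2) / 2)) / σ ^ 2))) := by
  classical
  set v : ℝ≥0 := Real.toNNReal (σ ^ 2) with hv
  set g : Fin d → ℝ → ℝ≥0∞ := fun i t =>
    ENNReal.ofReal (rexp ((δ i * t - (δ i * x i + δ i ^ 2 / 2)) / σ ^ 2)) with hgdef
  have hσ2 : (0:ℝ) < σ ^ 2 := by positivity
  have hg : ∀ i, Measurable (g i) := by intro i; fun_prop
  set F : (Fin d → ℝ) → ℝ≥0∞ := fun z => ENNReal.ofReal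
    (rexp ((dotp δ z - (dotp δ x + (∑ i, δ i ^ 2) / 2)) / σ ^ 2)) with hFdef
  have hFprod : ∀ z, F z = ∏ i, g i (z i) := by
    intro z
    rw [hFdef, hgdef]
    simp only
    rw [← ENNReal.ofReal_prod_of_nonneg (fun i _ => (Real.exp_pos _).le), ← Real.exp_sum]
    congr 2
    rw [← Finset.sum_div]
    congr 1
    unfold dotp
    rw [Finset.sum_sub_distrib, Finset.sum_add_distrib, ← Finset.sum_div]
  unfold gaussianVec
  refine Measure.pi_eq fun s hs => ?_
  have hbox : MeasurableSet (Set.pi Set.univ s) := MeasurableSet.univ_pi hs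
  rw [withDensity_apply _ hbox, ← lintegral_indicator hbox]
  have hind : Set.indicator (Set.pi Set.univ s) F
      = fun z => ∏ i, Set.indicator (s i) (g i) (z i) := by
    funext z
    by_cases hz : z ∈ Set.pi Set.univ s
    · rw [Set.indicator_of_mem hz, hFprod]
      exact Finset.prod_congr rfl fun i _ =>
        (Set.indicator_of_mem (hz i (Set.mem_univ i)) _).symm
    · rw [Set.indicator_of_notMem hz]
      simp only [Set.mem_pi, Set.mem_univ, forall_true_left, not_forall] at hz
      obtain ⟨i, hi⟩ := hz
      exact (Finset.prod_eq_zero (Finset.mem_univ i)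
        (Set.indicator_of_notMem hi _)).symm
  rw [hind, lintegral_pi_prod _ _ fun i => (hg i).indicator (hs i)]
  refine Finset.prod_congr rfl fun i _ => ?_
  rw [lintegral_indicator (hs i), ← withDensity_apply _ (hs i), Pi.add_apply,
    gaussian_shift_density hσ (x i) (δ i)]

end pidensity


lemma np_core {α : Type*} [MeasurableSpace α] (μ : Measure α) [IsFiniteMeasure μ]
    {ρ : α → ℝ≥0∞} (hρ : Measurable ρ) (r : ℝ≥0∞) {A B : Set α}
    (hA : MeasurableSet A) (hB : MeasurableSet B)
    (hle : ∀ z ∈ A, ρ z ≤ r) (hge : ∀ z ∉ A, r ≤ ρ z)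
    (h : μ A ≤ μ B) : μ.withDensity ρ A ≤ μ.withDensity ρ B := by
  set ν := μ.withDensity ρ with hν
  have hAB : μ (A \ B) ≤ μ (B \ A) := by
    have h1 : μ (A ∩ B) + μ (A \ B) ≤ μ (A ∩ B) + μ (B \ A) := by
      calc μ (A ∩ B) + μ (A \ B) = μ A := measure_inter_add_diff A hB
        _ ≤ μ B := h
        _ = μ (B ∩ A) + μ (B \ A) := (measure_inter_add_diff B hA).symm
        _ = μ (A ∩ B) + μ (B \ A) := by rw [Set.inter_comm]
    exact ENNReal.le_of_add_le_add_left (measure_ne_top μ _) h1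
  have hub : ν (A \ B) ≤ r * μ (A \ B) := by
    rw [hν, withDensity_apply _ (hA.diff hB)]
    calc ∫⁻ z in A \ B, ρ z ∂μ ≤ ∫⁻ _ in A \ B, r ∂μ :=
          setLIntegral_mono measurable_const fun z hz => hle z hz.1
      _ = r * μ (A \ B) := setLIntegral_const _ _
  have hlb : r * μ (B \ A) ≤ ν (B \ A) := by
    rw [hν, withDensity_apply _ (hB.diff hA)]
    calc r * μ (B \ A) = ∫⁻ _ in B \ A, r ∂μ := (setLIntegral_const _ _).symm
      _ ≤ ∫⁻ z in B \ A, ρ z ∂μ := setLIntegral_mono hρ fun z hz => hge z hz.2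
  calc ν A = ν (A ∩ B) + ν (A \ B) := (measure_inter_add_diff A hB).symm
    _ ≤ ν (A ∩ B) + r * μ (A \ B) := add_le_add_right hub _
    _ ≤ ν (A ∩ B) + r * μ (B \ A) := add_le_add_right (mul_le_mul_right hAB r) _
    _ ≤ ν (A ∩ B) + ν (B \ A) := add_le_add_right hlb _
    _ = ν (B ∩ A) + ν (B \ A) := by rw [Set.inter_comm]
    _ = ν B := measure_inter_add_diff B hA

lemma compl_le_compl_of_le {α : Type*} [MeasurableSpace α] (μ : Measure α)
    [IsProbabilityMeasure μ] {S T : Set α} (hS : MeasurableSet S) (hT : MeasurableSet T)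
    (h : μ S ≤ μ T) : μ Tᶜ ≤ μ Sᶜ := by
  rw [measure_compl hS (measure_ne_top μ S), measure_compl hT (measure_ne_top μ T)]
  exact tsub_le_tsub_left h _


/-- **Neyman–Pearson for Gaussians with different means** (Lemma 1).
Let X ~ N(x, σ²I), Y ~ N(x+δ, σ²I), M : ℝ^d → {0,1} measurable and β ∈ ℝ.
(1) If Z = {z : δᵀz ≤ β} and Pr(M(X)=1) ≥ Pr(X ∈ Z), then
    Pr(M(Y)=1) ≥ Pr(Y ∈ Z).
(2) If Z = {z : δᵀz ≥ β} and Pr(M(X)=1) ≤ Pr(X ∈ Z), then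
    Pr(M(Y)=1) ≤ Pr(Y ∈ Z). -/
theorem neyman_pearson_gaussian
    {d : ℕ} (hd : 1 ≤ d) (σ : ℝ) (hσ : 0 < σ) (x δ : Fin d → ℝ)
    (M : (Fin d → ℝ) → Bool) (hM : Measurable M) (β : ℝ) :
    (gaussianVec x σ {z | dotp δ z ≤ β} ≤ gaussianVec x σ {z | M z = true} →
      gaussianVec (x + δ) σ {z | dotp δ z ≤ β} ≤
        gaussianVec (x + δ) σ {z | M z = true}) ∧
    (gaussianVec x σ {z | M z = true} ≤ gaussianVec x σ {z | β ≤ dotp δ z} →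
      gaussianVec (x + δ) σ {z | M z = true} ≤
        gaussianVec (x + δ) σ {z | β ≤ dotp δ z}) := by
    classical
  have hσ2 : (0:ℝ) < σ ^ 2 := by positivity
  set C : ℝ := dotp δ x + (∑ i, δ i ^ 2) / 2 with hC
  set ρ : (Fin d → ℝ) → ℝ≥0∞ :=
    fun z => ENNReal.ofReal (rexp ((dotp δ z - C) / σ ^ 2)) with hρdef
  have hrep : gaussianVec (x + δ) σ = (gaussianVec x σ).withDensity ρ :=
    gaussianVec_shift_density hσ x δ
  have hdotp : Measurable fun z : Fin d → ℝ => dotp δ z := by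
    unfold dotp
    exact Finset.measurable_sum _ fun i _ => (measurable_pi_apply i).const_mul _
  have hρ : Measurable ρ :=
    (Real.measurable_exp.comp ((hdotp.sub_const C).div_const _)).ennreal_ofReal
  have hP0 : IsProbabilityMeasure (gaussianVec x σ) := by
    unfold gaussianVec; infer_instance
  have hP1 : IsProbabilityMeasure (gaussianVec (x + δ) σ) := by
    unfold gaussianVec; infer_instance
  have hBset : MeasurableSet {z : Fin d → ℝ | M z = true} :=
    hM (measurableSet_singleton true)
  have hA1 : MeasurableSet {z : Fin d → ℝ | dotp δ z ≤ β} :=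
    measurableSet_le hdotp measurable_const
  have hA2 : MeasurableSet {z : Fin d → ℝ | β ≤ dotp δ z} :=
    measurableSet_le measurable_const hdotp
  set r : ℝ≥0∞ := ENNReal.ofReal (rexp ((β - C) / σ ^ 2)) with hr
  have hmono : ∀ {u w : ℝ}, u ≤ w →
      ENNReal.ofReal (rexp ((u - C) / σ ^ 2)) ≤ ENNReal.ofReal (rexp ((w - C) / σ ^ 2)) :=
    fun h => ENNReal.ofReal_le_ofReal (Real.exp_le_exp.2
      (div_le_div_of_nonneg_right (sub_le_sub_right h C) hσ2.le))
  constructor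
  · intro h
    rw [hrep]
    exact np_core _ hρ r hA1 hBset (fun z hz => hmono hz)
      (fun z hz => hmono (le_of_lt (not_le.1 hz))) h
  · intro h
    have h1 : gaussianVec x σ {z | β ≤ dotp δ z}ᶜ ≤ gaussianVec x σ {z | M z = true}ᶜ :=
      compl_le_compl_of_le _ hBset hA2 h
    have h2 : gaussianVec (x + δ) σ {z | β ≤ dotp δ z}ᶜ ≤
        gaussianVec (x + δ) σ {z | M z = true}ᶜ := by
      rw [hrep]
      refine np_core _ hρ r hA2.compl hBset.compl ?_ ?_ h1
      · intro z hz
        exact hmono (le_of_lt (not_le.1 hz))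
      · intro z hz
        exact hmono (not_not.1 hz)
    have h3 := compl_le_compl_of_le (gaussianVec (x + δ) σ)
      hA2.compl hBset.compl h2
    rwa [compl_compl, compl_compl] at h3
end

section
/- Let f : ℝ^d → {1,…,c} be a base classifier, let Γ = {b_1,…,b_k} be a set of k distinct labels, and let p̄_{b_1} ≤ … ≤ p̄_{b_k} be reals with Pr(f(X) = b_j) ≤ p̄_{b_j} for every j. For t = 1,…,k set p̄_{S_t} = Σ_{j=1}^t p̄_{b_j} and assume 0 < p̄_{S_t} < 1. Then for every δ ∈ ℝ^d with δ ≠ 0, min_{i∈Γ} Pr(f(Y) = i) ≤ min_{1≤t≤k} Φ(Φ⁻¹(p̄_{S_t}) + ‖δ‖₂/σ)/t. -/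
open MeasureTheory ProbabilityTheory Real Filter

lemma my_gauss_singleton (m : ℝ) (v : NNReal) (t : ℝ) : gaussianReal m v {t} = 0 ∨ v = 0 := by
  by_cases hv : v = 0
  · exact Or.inr hv
  · exact Or.inl ((gaussianReal_absolutelyContinuous m hv) (measure_singleton t))

lemma my_g01_singleton (t : ℝ) : gaussianReal 0 1 {t} = 0 :=
  (gaussianReal_absolutelyContinuous 0 one_ne_zero) (measure_singleton t)

lemma my_g01_Iio (t : ℝ) : gaussianReal 0 1 (Set.Iio t) = gaussianReal 0 1 (Set.Iic t) := by
  have : Set.Iic t = Set.Iio t ∪ {t} := by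
    ext y; simp [le_iff_lt_or_eq]
  refine le_antisymm (measure_mono Set.Iio_subset_Iic_self) ?_
  rw [this]
  calc gaussianReal 0 1 (Set.Iio t ∪ {t}) ≤ gaussianReal 0 1 (Set.Iio t) + gaussianReal 0 1 {t} :=
        measure_union_le _ _
    _ = gaussianReal 0 1 (Set.Iio t) := by rw [my_g01_singleton]; simp

lemma my_Phi_ofReal (t : ℝ) : gaussianReal 0 1 (Set.Iic t) = ENNReal.ofReal (Phi t) := by
  rw [Phi, ENNReal.ofReal_toReal (measure_ne_top _ _)]

lemma my_Phi_nonneg (t : ℝ) : 0 ≤ Phi t := ENNReal.toReal_nonneg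

lemma my_g01_Ici (t : ℝ) : gaussianReal 0 1 (Set.Ici t) = ENNReal.ofReal (1 - Phi t) := by
  have h0 : Set.Ici t = (Set.Iio t)ᶜ := (Set.compl_Iio).symm
  rw [h0, measure_compl measurableSet_Iio (measure_ne_top _ _), measure_univ,
    my_g01_Iio, my_Phi_ofReal, ENNReal.ofReal_sub _ (my_Phi_nonneg t), ENNReal.ofReal_one]

lemma my_Phi_le_one (t : ℝ) : Phi t ≤ 1 := by
  rw [Phi]
  have := prob_le_one (μ := gaussianReal 0 1) (s := Set.Iic t)
  calc (gaussianReal 0 1 (Set.Iic t)).toReal ≤ (1 : ENNReal).toReal :=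
        ENNReal.toReal_mono (by simp) this
    _ = 1 := by simp

lemma my_Phi_mono : Monotone Phi := by
  intro a b hab
  exact ENNReal.toReal_mono (measure_ne_top _ _) (measure_mono (Set.Iic_subset_Iic.2 hab))

lemma my_Phi_neg (t : ℝ) : Phi (-t) = 1 - Phi t := by
  have hmap : (gaussianReal 0 1).map (fun y => (-1 : ℝ) * y) = gaussianReal 0 1 := by
    rw [show (fun y => (-1:ℝ) * y) = ((-1:ℝ) * ·) from rfl, gaussianReal_map_const_mul]
    congr 1
    · simp
    · rw [mul_one]; exact NNReal.eq (by norm_num)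
  have : gaussianReal 0 1 (Set.Iic (-t)) = gaussianReal 0 1 (Set.Ici t) := by
    conv_lhs => rw [← hmap]
    rw [Measure.map_apply (by fun_prop) measurableSet_Iic]
    congr 1
    ext y
    simp only [Set.mem_preimage, Set.mem_Iic, Set.mem_Ici]
    constructor <;> intro h <;> linarith
  rw [Phi, this, my_g01_Ici, ENNReal.toReal_ofReal]
  have := my_Phi_le_one t; linarith

-- Lipschitz bound
lemma my_gaussianPDF_le (x : ℝ) : gaussianPDF 0 1 x ≤ ENNReal.ofReal ((Real.sqrt (2*π))⁻¹) := by
  rw [gaussianPDF]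
  apply ENNReal.ofReal_le_ofReal
  rw [gaussianPDFReal]
  simp only [NNReal.coe_one, mul_one]
  have h1 : rexp (-(x - 0)^2 / 2) ≤ 1 := by
    rw [Real.exp_le_one_iff]
    nlinarith [sq_nonneg (x - 0)]
  have hs : (0:ℝ) < Real.sqrt (2*π) := Real.sqrt_pos.2 (by positivity)
  have h2 : (0:ℝ) < (Real.sqrt (2*π))⁻¹ := by positivity
  exact mul_le_of_le_one_right h2.le h1

lemma my_Phi_sub_le {a b : ℝ} (hab : a ≤ b) :
    Phi b - Phi a ≤ (Real.sqrt (2*π))⁻¹ * (b - a) := by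
  have hsplit : gaussianReal 0 1 (Set.Iic b)
      = gaussianReal 0 1 (Set.Iic a) + gaussianReal 0 1 (Set.Ioc a b) := by
    rw [← measure_union ?_ measurableSet_Ioc, Set.Iic_union_Ioc_eq_Iic hab]
    exact Set.Iic_disjoint_Ioc le_rfl
  have hs : (0:ℝ) < Real.sqrt (2*π) := Real.sqrt_pos.2 (by positivity)
  have hb : gaussianReal 0 1 (Set.Ioc a b) ≤ ENNReal.ofReal ((Real.sqrt (2*π))⁻¹ * (b - a)) := by
    rw [gaussianReal_apply 0 one_ne_zero]
    calc ∫⁻ x in Set.Ioc a b, gaussianPDF 0 1 x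
        ≤ ∫⁻ _ in Set.Ioc a b, ENNReal.ofReal ((Real.sqrt (2*π))⁻¹) :=
          lintegral_mono fun x => my_gaussianPDF_le x
      _ = ENNReal.ofReal ((Real.sqrt (2*π))⁻¹) * volume (Set.Ioc a b) := by
          rw [lintegral_const, Measure.restrict_apply MeasurableSet.univ, Set.univ_inter]
      _ = ENNReal.ofReal ((Real.sqrt (2*π))⁻¹ * (b - a)) := by
          rw [Real.volume_Ioc, ENNReal.ofReal_mul (by positivity)]
  have : Phi b ≤ Phi a + (Real.sqrt (2*π))⁻¹ * (b - a) := by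
    rw [Phi, Phi, hsplit, ENNReal.toReal_add (measure_ne_top _ _) (measure_ne_top _ _)]
    have := ENNReal.toReal_mono ENNReal.ofReal_ne_top hb
    rw [ENNReal.toReal_ofReal (mul_nonneg (by positivity) (by linarith))] at this
    linarith
  linarith

lemma my_Phi_continuous : Continuous Phi := by
  rw [Metric.continuous_iff]
  intro x ε hε
  have hs : (0:ℝ) < Real.sqrt (2*π) := Real.sqrt_pos.2 (by positivity)
  have hM : (0:ℝ) < (Real.sqrt (2*π))⁻¹ := by positivity
  refine ⟨ε * (Real.sqrt (2*π)), mul_pos hε hs, fun a ha => ?_⟩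
  rw [Real.dist_eq] at ha ⊢
  have key : ∀ u v : ℝ, u ≤ v → |Phi v - Phi u| ≤ (Real.sqrt (2*π))⁻¹ * (v - u) := by
    intro u v huv
    rw [abs_of_nonneg (by linarith [my_Phi_mono huv])]
    exact my_Phi_sub_le huv
  rcases le_total a x with h | h
  · have := key a x h
    have h2 : |Phi a - Phi x| ≤ (Real.sqrt (2*π))⁻¹ * (x - a) := by
      rw [abs_sub_comm]; exact this
    have h3 : x - a < ε * Real.sqrt (2*π) := by
      rw [abs_sub_comm] at ha
      calc x - a ≤ |x - a| := le_abs_self _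
        _ < _ := ha
    calc |Phi a - Phi x| ≤ (Real.sqrt (2*π))⁻¹ * (x - a) := h2
      _ < (Real.sqrt (2*π))⁻¹ * (ε * Real.sqrt (2*π)) := by
          apply mul_lt_mul_of_pos_left h3 hM
      _ = ε := by field_simp
  · have := key x a h
    have h3 : a - x < ε * Real.sqrt (2*π) := by
      calc a - x ≤ |a - x| := le_abs_self _
        _ < _ := ha
    calc |Phi a - Phi x| ≤ (Real.sqrt (2*π))⁻¹ * (a - x) := this
      _ < (Real.sqrt (2*π))⁻¹ * (ε * Real.sqrt (2*π)) := by
          apply mul_lt_mul_of_pos_left h3 hM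
      _ = ε := by field_simp

lemma my_Phi_tendsto_atTop : Tendsto Phi atTop (nhds 1) := by
  have h := tendsto_measure_Iic_atTop (gaussianReal 0 1)
  rw [measure_univ] at h
  have := (ENNReal.tendsto_toReal (by simp : (1:ENNReal) ≠ ⊤)).comp h
  have e : ((1:ENNReal).toReal) = 1 := by simp
  rw [e] at this
  exact this

lemma my_Phi_tendsto_atBot : Tendsto Phi atBot (nhds 0) := by
  have h1 : Tendsto (fun t : ℝ => 1 - Phi (-t)) atBot (nhds 0) := by
    have h2 : Tendsto (fun t : ℝ => -t) atBot atTop := tendsto_neg_atBot_atTop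
    have h3 := my_Phi_tendsto_atTop.comp h2
    have := (tendsto_const_nhds (x := (1:ℝ)) (f := atBot)).sub h3
    simpa using this
  refine h1.congr fun t => ?_
  rw [my_Phi_neg]
  ring

lemma my_Phi_surj {p : ℝ} (hp : p ∈ Set.Ioo (0:ℝ) 1) : ∃ t, Phi t = p := by
  obtain ⟨a, ha⟩ : ∃ a, Phi a < p :=
    (my_Phi_tendsto_atBot.eventually_lt_const hp.1).exists
  obtain ⟨b, hb⟩ : ∃ b, p < Phi b :=
    (my_Phi_tendsto_atTop.eventually_const_lt hp.2).exists
  have hab : a ≤ b := by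
    by_contra h
    push_neg at h
    have := my_Phi_mono h.le
    linarith
  have := intermediate_value_Icc hab my_Phi_continuous.continuousOn
  have hmem : p ∈ Set.Icc (Phi a) (Phi b) := ⟨ha.le, hb.le⟩
  obtain ⟨t, _, ht⟩ := this hmem
  exact ⟨t, ht⟩

lemma my_Phi_PhiInv {p : ℝ} (hp : p ∈ Set.Ioo (0:ℝ) 1) : Phi (PhiInv p) = p :=
  Function.invFun_eq (my_Phi_surj hp)

lemma my_gauss_map_affine (M : ℝ) {s : ℝ} (hs : 0 < s) :
    (gaussianReal 0 1).map (fun y => s * y + M) = gaussianReal M (Real.toNNReal (s^2)) := by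
  have h1 : (fun y : ℝ => s * y + M) = (fun y : ℝ => y + M) ∘ ((s : ℝ) * ·) := rfl
  rw [h1, ← Measure.map_map (by fun_prop) (by fun_prop), gaussianReal_map_const_mul,
    show (fun y : ℝ => y + M) = (· + M) from rfl, gaussianReal_map_add_const]
  congr 1
  · ring
  · ext
    simp [Real.coe_toNNReal _ (sq_nonneg s)]

lemma my_gauss_Ici (M : ℝ) {s : ℝ} (hs : 0 < s) (τ : ℝ) :
    gaussianReal M (Real.toNNReal (s^2)) (Set.Ici τ) = ENNReal.ofReal (Phi ((M - τ)/s)) := by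
  rw [← my_gauss_map_affine M hs, Measure.map_apply (by fun_prop) measurableSet_Ici]
  have hpre : (fun y : ℝ => s * y + M) ⁻¹' Set.Ici τ = Set.Ici ((τ - M)/s) := by
    ext y
    simp only [Set.mem_preimage, Set.mem_Ici]
    rw [div_le_iff₀ hs]
    constructor <;> intro h <;> nlinarith
  rw [hpre, my_g01_Ici]
  congr 1
  have : (M - τ)/s = -((τ - M)/s) := by ring
  rw [this, my_Phi_neg]

lemma my_pdf_toNNReal (m aa x : ℝ) (ha : 0 ≤ aa) :
    gaussianPDFReal m (Real.toNNReal aa) x = (Real.sqrt (2*π*aa))⁻¹ * rexp (-(x-m)^2/(2*aa)) := by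
  rw [gaussianPDFReal, Real.coe_toNNReal _ ha]

lemma my_pdf_mul (m₁ m₂ : ℝ) {v₁ v₂ : NNReal} (h₁ : v₁ ≠ 0) (h₂ : v₂ ≠ 0) (t x : ℝ) :
    gaussianPDFReal m₁ v₁ x * gaussianPDFReal m₂ v₂ (t - x)
      = gaussianPDFReal (m₁ + m₂) (v₁ + v₂) t *
        gaussianPDFReal (m₁ + (v₁:ℝ) * (t - m₁ - m₂) / ((v₁:ℝ) + (v₂:ℝ)))
          (Real.toNNReal ((v₁:ℝ) * (v₂:ℝ) / ((v₁:ℝ) + (v₂:ℝ)))) x := by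
  set a : ℝ := (v₁:ℝ) with hadef
  set b : ℝ := (v₂:ℝ) with hbdef
  have ha : (0:ℝ) < a := by
    simp only [hadef]
    exact_mod_cast pos_iff_ne_zero.2 h₁
  have hb : (0:ℝ) < b := by
    simp only [hbdef]
    exact_mod_cast pos_iff_ne_zero.2 h₂
  have hV : (0:ℝ) < a + b := by linarith
  have e₁ : v₁ = Real.toNNReal a := (Real.toNNReal_coe).symm
  have e₂ : v₂ = Real.toNNReal b := (Real.toNNReal_coe).symm
  have e₃ : v₁ + v₂ = Real.toNNReal (a + b) := by
    rw [e₁, e₂, Real.toNNReal_add ha.le hb.le]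
  rw [e₃]
  conv_lhs => rw [e₁, e₂]
  rw [my_pdf_toNNReal _ _ _ ha.le, my_pdf_toNNReal _ _ _ hb.le,
    my_pdf_toNNReal _ _ _ hV.le, my_pdf_toNNReal _ _ _ (by positivity : (0:ℝ) ≤ a*b/(a+b))]
  rw [mul_mul_mul_comm, mul_mul_mul_comm ((Real.sqrt (2*π*(a+b)))⁻¹)]
  have hπ : (0:ℝ) < π := Real.pi_pos
  congr 1
  · rw [← mul_inv, ← mul_inv, ← Real.sqrt_mul (by positivity), ← Real.sqrt_mul (by positivity)]
    congr 2
    field_simp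
  · rw [← Real.exp_add, ← Real.exp_add]
    congr 1
    field_simp
    ring

lemma my_conv_integral (m₁ m₂ : ℝ) {v₁ v₂ : NNReal} (h₁ : v₁ ≠ 0) (h₂ : v₂ ≠ 0) (t : ℝ) :
    ∫ x : ℝ, gaussianPDFReal m₁ v₁ x * gaussianPDFReal m₂ v₂ (t - x)
      = gaussianPDFReal (m₁ + m₂) (v₁ + v₂) t := by
  have ha : (0:ℝ) < v₁ := by exact_mod_cast pos_iff_ne_zero.2 h₁
  have hb : (0:ℝ) < v₂ := by exact_mod_cast pos_iff_ne_zero.2 h₂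
  have hv' : Real.toNNReal ((v₁:ℝ) * (v₂:ℝ) / ((v₁:ℝ) + (v₂:ℝ))) ≠ 0 := by
    refine (Real.toNNReal_pos.2 (by positivity)).ne'
  calc ∫ x : ℝ, gaussianPDFReal m₁ v₁ x * gaussianPDFReal m₂ v₂ (t - x)
      = ∫ x : ℝ, gaussianPDFReal (m₁ + m₂) (v₁ + v₂) t *
          gaussianPDFReal (m₁ + (v₁:ℝ) * (t - m₁ - m₂) / ((v₁:ℝ) + (v₂:ℝ)))
            (Real.toNNReal ((v₁:ℝ) * (v₂:ℝ) / ((v₁:ℝ) + (v₂:ℝ)))) x := by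
        congr 1; ext x; exact my_pdf_mul m₁ m₂ h₁ h₂ t x
    _ = gaussianPDFReal (m₁ + m₂) (v₁ + v₂) t * ∫ x : ℝ, gaussianPDFReal
            (m₁ + (v₁:ℝ) * (t - m₁ - m₂) / ((v₁:ℝ) + (v₂:ℝ)))
            (Real.toNNReal ((v₁:ℝ) * (v₂:ℝ) / ((v₁:ℝ) + (v₂:ℝ)))) x := by
        rw [integral_const_mul]
    _ = gaussianPDFReal (m₁ + m₂) (v₁ + v₂) t := by
        rw [integral_gaussianPDFReal_eq_one _ hv', mul_one]

lemma my_conv_lintegral (m₁ m₂ : ℝ) {v₁ v₂ : NNReal} (h₁ : v₁ ≠ 0) (h₂ : v₂ ≠ 0) (t : ℝ) :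
    ∫⁻ x : ℝ, gaussianPDF m₁ v₁ x * gaussianPDF m₂ v₂ (t - x)
      = gaussianPDF (m₁ + m₂) (v₁ + v₂) t := by
  have hint : Integrable (fun x : ℝ => gaussianPDFReal m₁ v₁ x * gaussianPDFReal m₂ v₂ (t - x)) := by
    have : (fun x : ℝ => gaussianPDFReal m₁ v₁ x * gaussianPDFReal m₂ v₂ (t - x))
        = fun x => gaussianPDFReal (m₁ + m₂) (v₁ + v₂) t *
          gaussianPDFReal (m₁ + (v₁:ℝ) * (t - m₁ - m₂) / ((v₁:ℝ) + (v₂:ℝ)))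
            (Real.toNNReal ((v₁:ℝ) * (v₂:ℝ) / ((v₁:ℝ) + (v₂:ℝ)))) x := by
      ext x; exact my_pdf_mul m₁ m₂ h₁ h₂ t x
    rw [this]
    exact (integrable_gaussianPDFReal _ _).const_mul _
  have hnn : 0 ≤ᵐ[volume] fun x : ℝ => gaussianPDFReal m₁ v₁ x * gaussianPDFReal m₂ v₂ (t - x) :=
    ae_of_all _ fun x => mul_nonneg (gaussianPDFReal_nonneg _ _ _) (gaussianPDFReal_nonneg _ _ _)
  have h := ofReal_integral_eq_lintegral_ofReal hint hnn
  calc ∫⁻ x : ℝ, gaussianPDF m₁ v₁ x * gaussianPDF m₂ v₂ (t - x)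
      = ∫⁻ x : ℝ, ENNReal.ofReal (gaussianPDFReal m₁ v₁ x * gaussianPDFReal m₂ v₂ (t - x)) := by
        congr 1; ext x
        rw [gaussianPDF, gaussianPDF, ← ENNReal.ofReal_mul (gaussianPDFReal_nonneg _ _ _)]
    _ = ENNReal.ofReal (∫ x : ℝ, gaussianPDFReal m₁ v₁ x * gaussianPDFReal m₂ v₂ (t - x)) := h.symm
    _ = gaussianPDF (m₁ + m₂) (v₁ + v₂) t := by
        rw [my_conv_integral m₁ m₂ h₁ h₂ t, gaussianPDF]

lemma my_gauss_conv (m₁ m₂ : ℝ) (v₁ v₂ : NNReal) :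
    ((gaussianReal m₁ v₁).prod (gaussianReal m₂ v₂)).map (fun p : ℝ × ℝ => p.1 + p.2)
      = gaussianReal (m₁ + m₂) (v₁ + v₂) := by
  by_cases h₁ : v₁ = 0
  · subst h₁
    rw [gaussianReal_zero_var, Measure.dirac_prod,
      Measure.map_map (by fun_prop) measurable_prodMk_left]
    have : ((fun p : ℝ × ℝ => p.1 + p.2) ∘ Prod.mk m₁) = (m₁ + ·) := rfl
    rw [this, gaussianReal_map_const_add, zero_add, add_comm m₂ m₁]
  by_cases h₂ : v₂ = 0
  · subst h₂
    rw [gaussianReal_zero_var, Measure.prod_dirac,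
      Measure.map_map (by fun_prop) (by fun_prop)]
    have : ((fun p : ℝ × ℝ => p.1 + p.2) ∘ (fun x => (x, m₂))) = (· + m₂) := rfl
    rw [this, gaussianReal_map_add_const, add_zero]
  -- main case
  have hV : v₁ + v₂ ≠ 0 := by
    intro h
    exact h₁ (by simpa using (add_eq_zero.1 h).1)
  ext s hs
  rw [Measure.map_apply (by fun_prop) hs]
  have hE : MeasurableSet ((fun p : ℝ × ℝ => p.1 + p.2) ⁻¹' s) := (by fun_prop : Measurable fun p : ℝ × ℝ => p.1 + p.2) hs
  rw [Measure.prod_apply hE]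
  -- inner section
  have hsec : ∀ x : ℝ, gaussianReal m₂ v₂ (Prod.mk x ⁻¹' ((fun p : ℝ × ℝ => p.1 + p.2) ⁻¹' s))
      = ∫⁻ u : ℝ, s.indicator (1 : ℝ → ENNReal) u * gaussianPDF m₂ v₂ (u - x) := by
    intro x
    have hpre : Prod.mk x ⁻¹' ((fun p : ℝ × ℝ => p.1 + p.2) ⁻¹' s) = {y : ℝ | x + y ∈ s} := rfl
    rw [hpre, gaussianReal_apply _ h₂]
    have hmeas : MeasurableSet {y : ℝ | x + y ∈ s} := (measurable_const_add x) hs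
    rw [← lintegral_indicator hmeas]
    have key : ∀ y : ℝ, {y : ℝ | x + y ∈ s}.indicator (gaussianPDF m₂ v₂) y
        = (fun u => s.indicator (1 : ℝ → ENNReal) u * gaussianPDF m₂ v₂ (u - x)) (x + y) := by
      intro y
      by_cases hy : x + y ∈ s
      · simp [Set.indicator_of_mem, hy, Set.mem_setOf_eq, add_sub_cancel_left]
      · simp [Set.indicator_of_notMem, hy, Set.mem_setOf_eq]
    calc ∫⁻ y, {y : ℝ | x + y ∈ s}.indicator (gaussianPDF m₂ v₂) y
        = ∫⁻ y, (fun u => s.indicator (1 : ℝ → ENNReal) u * gaussianPDF m₂ v₂ (u - x)) (x + y) := by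
          congr 1; ext y; exact key y
      _ = ∫⁻ u : ℝ, s.indicator (1 : ℝ → ENNReal) u * gaussianPDF m₂ v₂ (u - x) :=
          lintegral_add_left_eq_self (μ := volume)
            (fun u => s.indicator (1 : ℝ → ENNReal) u * gaussianPDF m₂ v₂ (u - x)) x
  simp_rw [hsec]
  -- outer integral: withDensity
  have hF : Measurable (Function.uncurry fun x u : ℝ =>
      s.indicator (1 : ℝ → ENNReal) u * gaussianPDF m₂ v₂ (u - x)) := by
    exact (((measurable_one.indicator hs).comp measurable_snd).mul
      ((measurable_gaussianPDF _ _).comp (measurable_snd.sub measurable_fst)))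
  have hmeasout : Measurable fun x : ℝ =>
      ∫⁻ u : ℝ, s.indicator (1 : ℝ → ENNReal) u * gaussianPDF m₂ v₂ (u - x) :=
    Measurable.lintegral_prod_right' (f := Function.uncurry fun x u : ℝ =>
      s.indicator (1 : ℝ → ENNReal) u * gaussianPDF m₂ v₂ (u - x)) hF
  rw [gaussianReal_of_var_ne_zero _ h₁,
    lintegral_withDensity_eq_lintegral_mul _ (measurable_gaussianPDF _ _) hmeasout]
  calc ∫⁻ x : ℝ, (gaussianPDF m₁ v₁ * fun x : ℝ =>
          ∫⁻ u : ℝ, s.indicator (1 : ℝ → ENNReal) u * gaussianPDF m₂ v₂ (u - x)) x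
      = ∫⁻ x : ℝ, ∫⁻ u : ℝ, gaussianPDF m₁ v₁ x *
          (s.indicator (1 : ℝ → ENNReal) u * gaussianPDF m₂ v₂ (u - x)) := by
        congr 1; ext x
        simp only [Pi.mul_apply]
        rw [← lintegral_const_mul' _ _ (by rw [gaussianPDF]; exact ENNReal.ofReal_ne_top)]
    _ = ∫⁻ u : ℝ, ∫⁻ x : ℝ, gaussianPDF m₁ v₁ x *
          (s.indicator (1 : ℝ → ENNReal) u * gaussianPDF m₂ v₂ (u - x)) := by
        apply lintegral_lintegral_swap
        exact (((measurable_gaussianPDF _ _).comp measurable_fst).mul hF).aemeasurable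
    _ = ∫⁻ u : ℝ, s.indicator (1 : ℝ → ENNReal) u *
          gaussianPDF (m₁ + m₂) (v₁ + v₂) u := by
        congr 1; ext u
        calc ∫⁻ x : ℝ, gaussianPDF m₁ v₁ x *
              (s.indicator (1 : ℝ → ENNReal) u * gaussianPDF m₂ v₂ (u - x))
            = ∫⁻ x : ℝ, s.indicator (1 : ℝ → ENNReal) u *
              (gaussianPDF m₁ v₁ x * gaussianPDF m₂ v₂ (u - x)) := by
              congr 1; ext x; ring
          _ = s.indicator (1 : ℝ → ENNReal) u *
              ∫⁻ x : ℝ, gaussianPDF m₁ v₁ x * gaussianPDF m₂ v₂ (u - x) := by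
              rw [lintegral_const_mul' _ _
                (by by_cases hu : u ∈ s <;> simp [hu] : s.indicator (1 : ℝ → ENNReal) u ≠ ⊤)]
          _ = s.indicator (1 : ℝ → ENNReal) u * gaussianPDF (m₁ + m₂) (v₁ + v₂) u := by
              rw [my_conv_lintegral m₁ m₂ h₁ h₂ u]
    _ = ∫⁻ u : ℝ, s.indicator (gaussianPDF (m₁ + m₂) (v₁ + v₂)) u := by
        congr 1; ext u
        by_cases hu : u ∈ s <;> simp [hu]
    _ = gaussianReal (m₁ + m₂) (v₁ + v₂) s := by
        rw [lintegral_indicator hs, ← gaussianReal_apply _ hV]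


lemma my_pi_map_sum (n : ℕ) (m : Fin n → ℝ) (w : Fin n → ℝ) (v : Fin n → NNReal) :
    (Measure.pi fun i => gaussianReal (m i) (v i)).map (fun z : Fin n → ℝ => ∑ i, w i * z i)
      = gaussianReal (∑ i, w i * m i) (∑ i, Real.toNNReal ((w i)^2) * v i) := by
  induction n with
  | zero =>
      rw [Measure.pi_of_empty]
      simp only [Finset.univ_eq_empty, Finset.sum_empty]
      rw [Measure.map_const]
      simp [gaussianReal_zero_var]
  | succ n ih =>
      set e := MeasurableEquiv.piFinSuccAbove (fun _ : Fin (n+1) => ℝ) 0 with he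
      have hmp := measurePreserving_piFinSuccAbove (fun i => gaussianReal (m i) (v i)) 0
      set g : ℝ × (Fin n → ℝ) → ℝ :=
        fun p => w 0 * p.1 + ∑ j : Fin n, w ((0:Fin (n+1)).succAbove j) * p.2 j with hg
      have hcomp : (fun z : Fin (n+1) → ℝ => ∑ i, w i * z i) = g ∘ e := by
        ext z
        simp only [hg, he, Function.comp_apply, MeasurableEquiv.piFinSuccAbove,
          MeasurableEquiv.coe_mk, Fin.insertNthEquiv, Equiv.coe_fn_symm_mk]
        rw [Fin.sum_univ_succAbove (fun i => w i * z i) 0]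
        simp [Fin.removeNth]
      have hgmeas : Measurable g := by fun_prop
      rw [hcomp, ← Measure.map_map hgmeas e.measurable, hmp.map_eq]
      -- now decompose g
      have hg2 : g = (fun p : ℝ × ℝ => p.1 + p.2) ∘
          (Prod.map (fun y : ℝ => w 0 * y) (fun y : Fin n → ℝ => ∑ j : Fin n, w ((0:Fin (n+1)).succAbove j) * y j)) := rfl
      rw [hg2, ← Measure.map_map (by fun_prop) (by fun_prop), ← Measure.map_prod_map _ _ (by fun_prop) (by fun_prop)]
      rw [show ((0:Fin (n+1)).succAbove) = Fin.succ from funext fun j => Fin.zero_succAbove j]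
      rw [ih (fun j => m j.succ) (fun j => w j.succ) (fun j => v j.succ)]
      rw [show (fun y : ℝ => w 0 * y) = ((w 0 : ℝ) * ·) from rfl, gaussianReal_map_const_mul]
      rw [my_gauss_conv]
      rw [Fin.sum_univ_succ (fun i => w i * m i), Fin.sum_univ_succ (fun i => Real.toNNReal ((w i)^2) * v i)]
      congr 2
      ext
      simp [Real.coe_toNNReal _ (sq_nonneg (w 0))]

lemma my_lintegral_pi (n : ℕ) (ρ : Fin n → Measure ℝ) [∀ i, SigmaFinite (ρ i)]
    (g : Fin n → ℝ → ENNReal) (hg : ∀ i, Measurable (g i)) :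
    ∫⁻ z, ∏ i, g i (z i) ∂Measure.pi ρ = ∏ i, ∫⁻ t, g i t ∂(ρ i) := by
  induction n with
  | zero =>
      rw [Measure.pi_of_empty]
      simp [lintegral_dirac]
  | succ n ih =>
      have hmp := measurePreserving_piFinSuccAbove ρ 0
      set G : ℝ × (Fin n → ℝ) → ENNReal :=
        fun p => g 0 p.1 * ∏ j : Fin n, g ((0:Fin (n+1)).succAbove j) (p.2 j) with hG
      have hcomp : (fun z : Fin (n+1) → ℝ => ∏ i, g i (z i))
          = G ∘ (MeasurableEquiv.piFinSuccAbove (fun _ : Fin (n+1) => ℝ) 0) := by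
        ext z
        simp only [hG, Function.comp_apply, MeasurableEquiv.piFinSuccAbove,
          MeasurableEquiv.coe_mk, Fin.insertNthEquiv, Equiv.coe_fn_symm_mk]
        rw [Fin.prod_univ_succAbove (fun i => g i (z i)) 0]
        simp [Fin.removeNth]
      have hGmeas : Measurable G := by
        apply Measurable.mul
        · exact (hg 0).comp measurable_fst
        · exact Finset.measurable_prod _ fun j _ =>
            (hg _).comp ((measurable_pi_apply j).comp measurable_snd)
      have h1 : ∫⁻ z, ∏ i, g i (z i) ∂Measure.pi ρ
          = ∫⁻ p, G p ∂((ρ 0).prod (Measure.pi fun j => ρ ((0:Fin (n+1)).succAbove j))) := by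
        rw [hcomp]
        exact hmp.lintegral_comp hGmeas
      rw [h1]
      have h2 : ∫⁻ p, G p ∂((ρ 0).prod (Measure.pi fun j => ρ ((0:Fin (n+1)).succAbove j)))
          = (∫⁻ t, g 0 t ∂ρ 0) *
            ∫⁻ y, ∏ j : Fin n, g ((0:Fin (n+1)).succAbove j) (y j)
              ∂(Measure.pi fun j => ρ ((0:Fin (n+1)).succAbove j)) := by
        exact lintegral_prod_mul (hg 0).aemeasurable
          (Finset.measurable_prod _ fun j _ =>
            (hg _).comp (measurable_pi_apply j)).aemeasurable
      rw [h2, ih (fun j => ρ ((0:Fin (n+1)).succAbove j)) (fun j => g ((0:Fin (n+1)).succAbove j))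
        (fun j => hg _), Fin.prod_univ_succ (fun i => ∫⁻ t, g i t ∂ρ i)]
      simp [Fin.zero_succAbove]

lemma my_pi_withDensity (n : ℕ) (ρ μ' : Fin n → Measure ℝ) [∀ i, SigmaFinite (ρ i)]
    [∀ i, SigmaFinite (μ' i)]
    (f : Fin n → ℝ → ENNReal) (hf : ∀ i, Measurable (f i))
    (h : ∀ i, μ' i = (ρ i).withDensity (f i)) :
    Measure.pi μ' = (Measure.pi ρ).withDensity (fun z => ∏ i, f i (z i)) := by
  apply Measure.pi_eq
  intro s hs
  rw [withDensity_apply _ (MeasurableSet.univ_pi hs)]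
  have key : ∫⁻ z in Set.univ.pi s, ∏ i, f i (z i) ∂Measure.pi ρ
      = ∫⁻ z, ∏ i, ((s i).indicator (1:ℝ→ENNReal) (z i) * f i (z i)) ∂Measure.pi ρ := by
    rw [← lintegral_indicator (MeasurableSet.univ_pi hs)]
    congr 1
    ext z
    by_cases hz : z ∈ Set.univ.pi s
    · rw [Set.indicator_of_mem hz]
      refine Finset.prod_congr rfl fun i _ => ?_
      rw [Set.indicator_of_mem (hz i (Set.mem_univ i)), Pi.one_apply, one_mul]
    · rw [Set.indicator_of_notMem hz]
      have : ∃ i, z i ∉ s i := by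
        by_contra hcon
        push_neg at hcon
        exact hz fun i _ => hcon i
      obtain ⟨i, hi⟩ := this
      refine (Finset.prod_eq_zero (Finset.mem_univ i) ?_).symm
      rw [Set.indicator_of_notMem hi, zero_mul]
  rw [key, my_lintegral_pi n ρ (fun i t => (s i).indicator (1:ℝ→ENNReal) t * f i t) (fun i => (measurable_one.indicator (hs i)).mul (hf i))]
  refine Finset.prod_congr rfl fun i _ => ?_
  rw [h i, withDensity_apply _ (hs i), ← lintegral_indicator (hs i)]
  congr 1
  ext tt
  by_cases ht : tt ∈ s i
  · rw [Set.indicator_of_mem ht, Set.indicator_of_mem ht, Pi.one_apply, one_mul]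
  · rw [Set.indicator_of_notMem ht, Set.indicator_of_notMem ht, zero_mul]

lemma my_gauss_shift (mm cc : ℝ) {s : ℝ} (hs : 0 < s) :
    gaussianReal (mm + cc) (Real.toNNReal (s^2))
      = (gaussianReal mm (Real.toNNReal (s^2))).withDensity
          (fun z => ENNReal.ofReal (Real.exp (cc * (z - mm) / s^2 - cc^2 / (2 * s^2)))) := by
  have hv : Real.toNNReal (s^2) ≠ 0 := (Real.toNNReal_pos.2 (by positivity)).ne'
  rw [gaussianReal_of_var_ne_zero _ hv, gaussianReal_of_var_ne_zero _ hv,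
    ← withDensity_mul _ (measurable_gaussianPDF _ _) (by fun_prop)]
  congr 1
  ext z
  simp only [Pi.mul_apply, gaussianPDF]
  rw [← ENNReal.ofReal_mul (gaussianPDFReal_nonneg _ _ _)]
  congr 1
  rw [gaussianPDFReal, gaussianPDFReal, Real.coe_toNNReal _ (by positivity)]
  conv_rhs => rw [mul_assoc, ← Real.exp_add]
  congr 1
  have h2 : (0:ℝ) < s^2 := by positivity
  field_simp
  ring

lemma my_NP {α : Type*} [MeasurableSpace α] (μ : Measure α) [IsFiniteMeasure μ]
    (F : α → ENNReal) (hF : Measurable F)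
    {A H : Set α} (hA : MeasurableSet A) (hH : MeasurableSet H) (r : ENNReal)
    (hle : ∀ z ∉ H, F z ≤ r) (hge : ∀ z ∈ H, r ≤ F z) (hμ : μ A ≤ μ H) :
    μ.withDensity F A ≤ μ.withDensity F H := by
  set ν := μ.withDensity F with hν
  have hsplitA : ν (A ∩ H) + ν (A \ H) = ν A := measure_inter_add_diff A hH
  have hsplitH : ν (H ∩ A) + ν (H \ A) = ν H := measure_inter_add_diff H hA
  have hdiff : μ (A \ H) ≤ μ (H \ A) := by
    have h1 : μ (A ∩ H) + μ (A \ H) = μ A := measure_inter_add_diff A hH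
    have h2 : μ (H ∩ A) + μ (H \ A) = μ H := measure_inter_add_diff H hA
    rw [Set.inter_comm] at h2
    have h3 : μ (A ∩ H) + μ (A \ H) ≤ μ (A ∩ H) + μ (H \ A) := by
      rw [h1, h2]; exact hμ
    exact (ENNReal.add_le_add_iff_left (measure_ne_top μ _)).1 h3
  have hAd : ν (A \ H) ≤ r * μ (A \ H) := by
    rw [hν, withDensity_apply _ (hA.diff hH)]
    calc ∫⁻ z in A \ H, F z ∂μ ≤ ∫⁻ _ in A \ H, r ∂μ :=
          setLIntegral_mono measurable_const fun z hz => hle z hz.2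
      _ = r * μ (A \ H) := setLIntegral_const _ _
  have hHd : r * μ (H \ A) ≤ ν (H \ A) := by
    rw [hν, withDensity_apply _ (hH.diff hA)]
    calc r * μ (H \ A) = ∫⁻ _ in H \ A, r ∂μ := (setLIntegral_const _ _).symm
      _ ≤ ∫⁻ z in H \ A, F z ∂μ := setLIntegral_mono hF fun z hz => hge z hz.1
  calc ν A = ν (A ∩ H) + ν (A \ H) := hsplitA.symm
    _ ≤ ν (A ∩ H) + r * μ (A \ H) := by gcongr
    _ ≤ ν (A ∩ H) + r * μ (H \ A) := by gcongr
    _ ≤ ν (A ∩ H) + ν (H \ A) := by gcongr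
    _ = ν (H ∩ A) + ν (H \ A) := by rw [Set.inter_comm]
    _ = ν H := hsplitH

/-- Bound on the smallest of the k probabilities: if Γ = {b₀,…,b_{k-1}} are k
distinct labels with Pr(f(X) = b_j) ≤ p̄_{b_j} (sorted increasingly) and
p̄_{S_t} = Σ_{j≤t} p̄_{b_j} ∈ (0,1), then for every δ ≠ 0,
min_{i∈Γ} Pr(f(Y)=i) ≤ min_{1≤t≤k} Φ(Φ⁻¹(p̄_{S_t}) + ‖δ‖₂/σ)/t. -/
theorem min_label_prob_bound
    {d c : ℕ} (hd : 1 ≤ d) (hc : 2 ≤ c)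
    (σ : ℝ) (hσ : 0 < σ) (x : Fin d → ℝ)
    (f : (Fin d → ℝ) → Fin c) (hf : Measurable f)
    (k : ℕ) (hk : 1 ≤ k) (b : Fin k → Fin c) (hbinj : Function.Injective b)
    (pbar : Fin k → ℝ) (hmono : Monotone pbar)
    (hub : ∀ j, (gaussianVec x σ {z | f z = b j}).toReal ≤ pbar j)
    (pS : Fin k → ℝ)
    (hpS : ∀ t, pS t = ∑ j ∈ Finset.univ.filter (fun j => j ≤ t), pbar j)
    (hpS01 : ∀ t, pS t ∈ Set.Ioo (0 : ℝ) 1)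
    (δ : Fin d → ℝ) (hδ : δ ≠ 0) :
    (⨅ j : Fin k, (gaussianVec (x + δ) σ {z | f z = b j}).toReal) ≤
      ⨅ t : Fin k, Phi (PhiInv (pS t) + l2norm δ / σ) / ((t : ℕ) + 1) := by
  classical
  haveI : Nonempty (Fin k) := ⟨⟨0, hk⟩⟩
  have hσ2 : (0:ℝ) < σ^2 := by positivity
  set v : NNReal := Real.toNNReal (σ^2) with hvdef
  -- norm facts
  have hL : (0:ℝ) < ∑ i, δ i ^ 2 := by
    obtain ⟨i, hi⟩ := Function.ne_iff.1 hδ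
    have hi' : δ i ≠ 0 := by simpa using hi
    exact Finset.sum_pos' (fun j _ => sq_nonneg _)
      ⟨i, Finset.mem_univ i, by positivity⟩
  have hnorm : 0 < l2norm δ := Real.sqrt_pos.2 hL
  have hnormsq : l2norm δ ^ 2 = ∑ i, δ i ^ 2 := Real.sq_sqrt hL.le
  set s₀ : ℝ := σ * l2norm δ with hs₀def
  have hs₀ : 0 < s₀ := mul_pos hσ hnorm
  set M : ℝ := ∑ i, δ i * x i with hMdef
  set u : (Fin d → ℝ) → ℝ := fun z => ∑ i, δ i * z i with hudef
  have humeas : Measurable u := by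
    apply Finset.measurable_sum
    intro i _
    exact (measurable_pi_apply i).const_mul _
  set μ := gaussianVec x σ with hμdef
  set ν := gaussianVec (x + δ) σ with hνdef
  haveI hprobμ : IsProbabilityMeasure μ := by rw [hμdef, gaussianVec]; infer_instance
  haveI hprobν : IsProbabilityMeasure ν := by rw [hνdef, gaussianVec]; infer_instance
  -- variance of u
  have hVar : (∑ i, Real.toNNReal ((δ i)^2) * v) = Real.toNNReal (s₀^2) := by
    have hcoe : ((∑ i, Real.toNNReal ((δ i)^2) * v : NNReal) : ℝ) = s₀^2 := by
      rw [NNReal.coe_sum]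
      calc (∑ i, ((Real.toNNReal ((δ i)^2) * v : NNReal) : ℝ))
          = ∑ i, (δ i)^2 * σ^2 := by
            refine Finset.sum_congr rfl fun i _ => ?_
            rw [NNReal.coe_mul, Real.coe_toNNReal _ (sq_nonneg _), hvdef,
              Real.coe_toNNReal _ hσ2.le]
        _ = s₀^2 := by
            rw [← Finset.sum_mul, hs₀def, mul_pow, ← hnormsq]
            ring
    conv_rhs => rw [← hcoe]
    rw [Real.toNNReal_coe]
  have hmapμ : μ.map u = gaussianReal M (Real.toNNReal (s₀^2)) := by
    rw [hμdef, gaussianVec, hudef, my_pi_map_sum d x δ (fun _ => v), hVar, hMdef]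
  have hmapν : ν.map u = gaussianReal (M + l2norm δ ^ 2) (Real.toNNReal (s₀^2)) := by
    rw [hνdef, gaussianVec, hudef, my_pi_map_sum d (x + δ) δ (fun _ => v), hVar]
    congr 1
    rw [hnormsq, hMdef]
    rw [← Finset.sum_add_distrib]
    refine Finset.sum_congr rfl fun i _ => ?_
    show δ i * (x i + δ i) = δ i * x i + δ i ^ 2
    ring
  -- density
  set κ : ℝ := M/σ^2 + (∑ i, δ i ^2)/(2*σ^2) with hκdef
  set F : (Fin d → ℝ) → ENNReal := fun z => ENNReal.ofReal (Real.exp (u z / σ^2 - κ)) with hFdef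
  have hFmeas : Measurable F := by
    apply Measurable.ennreal_ofReal
    exact (Real.measurable_exp.comp ((humeas.div_const _).sub_const _))
  have hdens : ν = μ.withDensity F := by
    rw [hνdef, hμdef, gaussianVec, gaussianVec]
    have hpw := my_pi_withDensity d (fun i => gaussianReal (x i) (Real.toNNReal (σ^2)))
      (fun i => gaussianReal ((x + δ) i) (Real.toNNReal (σ^2)))
      (fun i z => ENNReal.ofReal (Real.exp (δ i * (z - x i)/σ^2 - (δ i)^2/(2*σ^2))))
      (fun i => by
        apply Measurable.ennreal_ofReal
        exact Real.measurable_exp.comp (((measurable_id.sub_const _).const_mul _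
          |>.div_const _).sub_const _))
      (fun i => my_gauss_shift (x i) (δ i) hσ)
    rw [hpw]
    congr 1
    ext z
    rw [hFdef]
    rw [← ENNReal.ofReal_prod_of_nonneg (fun i _ => (Real.exp_pos _).le), ← Real.exp_sum]
    congr 2
    rw [Finset.sum_sub_distrib, ← Finset.sum_div, ← Finset.sum_div]
    have h1 : (∑ i, δ i * (z i - x i)) = u z - M := by
      rw [hudef, hMdef, ← Finset.sum_sub_distrib]
      exact Finset.sum_congr rfl fun i _ => by ring
    rw [h1, hκdef]
    ring
  -- per-label measurability and disjointness
  have hAjm : ∀ j : Fin k, MeasurableSet {z : Fin d → ℝ | f z = b j} :=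
    fun j => hf (measurableSet_singleton (b j))
  -- bounded below inf
  have hbdd : BddBelow (Set.range fun j : Fin k => (ν {z | f z = b j}).toReal) :=
    ⟨0, fun y ⟨j, hj⟩ => hj ▸ ENNReal.toReal_nonneg⟩
  refine le_ciInf fun t => ?_
  -- setup for t
  set τ : ℝ := M - s₀ * PhiInv (pS t) with hτdef
  set H : Set (Fin d → ℝ) := u ⁻¹' (Set.Ici τ) with hHdef
  have hHm : MeasurableSet H := humeas measurableSet_Ici
  have hμH : μ H = ENNReal.ofReal (pS t) := by
    rw [hHdef, ← Measure.map_apply humeas measurableSet_Ici, hmapμ, my_gauss_Ici M hs₀ τ]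
    congr 1
    have harg : (M - τ)/s₀ = PhiInv (pS t) := by
      rw [hτdef]
      field_simp
      ring
    rw [harg, my_Phi_PhiInv (hpS01 t)]
  have hνH : ν H = ENNReal.ofReal (Phi (PhiInv (pS t) + l2norm δ / σ)) := by
    rw [hHdef, ← Measure.map_apply humeas measurableSet_Ici, hmapν, my_gauss_Ici _ hs₀ τ]
    congr 2
    rw [hτdef, hs₀def]
    field_simp
    ring
  -- the union set A
  set A : Set (Fin d → ℝ) := ⋃ j ∈ Finset.Iic t, {z | f z = b j} with hAdef
  have hAm : MeasurableSet A := (Finset.Iic t).measurableSet_biUnion fun j _ => hAjm j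
  have hdisj : (↑(Finset.Iic t) : Set (Fin k)).PairwiseDisjoint
      (fun j => {z : Fin d → ℝ | f z = b j}) := by
    intro i _ j _ hij
    simp only [Function.onFun, Set.disjoint_left]
    intro z hzi hzj
    exact hij (hbinj (hzi.symm.trans hzj))
  have hμAsum : μ A = ∑ j ∈ Finset.Iic t, μ {z | f z = b j} :=
    measure_biUnion_finset hdisj fun j _ => hAjm j
  have hνAsum : ν A = ∑ j ∈ Finset.Iic t, ν {z | f z = b j} :=
    measure_biUnion_finset hdisj fun j _ => hAjm j
  have hIic : Finset.univ.filter (fun j => j ≤ t) = Finset.Iic t := by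
    ext j; simp
  have hpSt : pS t = ∑ j ∈ Finset.Iic t, pbar j := by rw [hpS t, hIic]
  have hμA_le : μ A ≤ μ H := by
    rw [hμAsum, hμH, hpSt]
    calc ∑ j ∈ Finset.Iic t, μ {z | f z = b j}
        ≤ ∑ j ∈ Finset.Iic t, ENNReal.ofReal (pbar j) := by
          refine Finset.sum_le_sum fun j _ => ?_
          rw [← ENNReal.ofReal_toReal (measure_ne_top μ _)]
          exact ENNReal.ofReal_le_ofReal (hub j)
      _ = ENNReal.ofReal (∑ j ∈ Finset.Iic t, pbar j) := by
          rw [ENNReal.ofReal_sum_of_nonneg fun j _ =>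
            le_trans ENNReal.toReal_nonneg (hub j)]
  -- Neyman-Pearson
  have hNP : ν A ≤ ν H := by
    rw [hdens]
    refine my_NP μ F hFmeas hAm hHm (ENNReal.ofReal (Real.exp (τ/σ^2 - κ))) ?_ ?_ ?_
    · intro z hz
      rw [hFdef]
      apply ENNReal.ofReal_le_ofReal
      apply Real.exp_le_exp.2
      have h1 : u z < τ := by
        simpa [hHdef, Set.mem_preimage, not_le] using hz
      have h2 : u z / σ^2 ≤ τ / σ^2 := by gcongr
      linarith
    · intro z hz
      rw [hFdef]
      apply ENNReal.ofReal_le_ofReal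
      apply Real.exp_le_exp.2
      have huz : τ ≤ u z := hz
      have h2 : τ/σ^2 ≤ u z/σ^2 := by gcongr
      linarith
    · exact hμA_le
  -- pass to reals
  have htoReal : (ν A).toReal ≤ Phi (PhiInv (pS t) + l2norm δ / σ) := by
    have h := ENNReal.toReal_mono (by rw [hνH]; exact ENNReal.ofReal_ne_top) hNP
    rwa [hνH, ENNReal.toReal_ofReal (my_Phi_nonneg _)] at h
  -- sum lower bound by inf
  have hinf_le : ∀ j : Fin k,
      (⨅ j : Fin k, (ν {z | f z = b j}).toReal) ≤ (ν {z | f z = b j}).toReal :=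
    fun j => ciInf_le hbdd j
  have hsum_ge : ((t : ℕ) + 1 : ℝ) * (⨅ j : Fin k, (ν {z | f z = b j}).toReal)
      ≤ (ν A).toReal := by
    have hcard : (Finset.Iic t).card = (t : ℕ) + 1 := Fin.card_Iic t
    have h := Finset.card_nsmul_le_sum (Finset.Iic t)
      (fun j => (ν {z | f z = b j}).toReal)
      (⨅ j : Fin k, (ν {z | f z = b j}).toReal) (fun j _ => hinf_le j)
    rw [hcard, nsmul_eq_mul] at h
    push_cast at h
    rw [hνAsum, ENNReal.toReal_sum fun j _ => measure_ne_top ν _]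
    exact h
  have htpos : (0:ℝ) < (t : ℕ) + 1 := by positivity
  rw [le_div_iff₀ htpos]
  calc (⨅ j : Fin k, (ν {z | f z = b j}).toReal) * ((t : ℕ) + 1)
      = ((t : ℕ) + 1 : ℝ) * (⨅ j : Fin k, (ν {z | f z = b j}).toReal) := by ring
    _ ≤ (ν A).toReal := hsum_ge
    _ ≤ Phi (PhiInv (pS t) + l2norm δ / σ) := htoReal
end
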